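/- If two reduced words w and w' over the vertex set of a simplicial graph are equivalent, then there is a unique permutation σ with w'_i = w_{σ(i)} for all i that additionally satisfies: whenever w_k = w_l with k < l, then σ⁻¹(k) < σ⁻¹(l) (i.e., σ preserves the relative order of equal letters). -/

import Mathlib

/-- One-step moves on words over the vertex set of a simplicial graph:
deleting one of two adjacent equal letters, or swapping two adjacent letters
joined by an edge. -/
inductive WordStep {V : Type*} (G : SimpleGraph V) : List V → List V → Prop
  | del (l r : List V) (a : V) : WordStep G (l ++ a :: a :: r) (l ++ a :: r)
  | swap (l r : List V) (a b : V) (h : G.Adj a b) :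
      WordStep G (l ++ a :: b :: r) (l ++ b :: a :: r)

/-- The equivalence relation on words generated by the moves. -/
def WordEquiv {V : Type*} (G : SimpleGraph V) : List V → List V → Prop :=
  Relation.EqvGen (WordStep G)

/-- A word is reduced if whenever two occurrences of the same vertex appear,
some vertex not adjacent to it lies strictly between them. -/
def IsReducedWord {V : Type*} (G : SimpleGraph V) (w : List V) : Prop :=
  ∀ k l : Fin w.length, (k : ℕ) < (l : ℕ) → w.get k = w.get l →
    ∃ p : Fin w.length, (k : ℕ) < (p : ℕ) ∧ (p : ℕ) < (l : ℕ) ∧ ¬ G.Adj (w.get k) (w.get p)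

namespace EqRedPerm

variable {V : Type*} {G : SimpleGraph V}

/-- single swap step -/
def S (G : SimpleGraph V) (u v : List V) : Prop :=
  ∃ l r a b, G.Adj a b ∧ u = l ++ a :: b :: r ∧ v = l ++ b :: a :: r

/-- swap equivalence -/
def SE (G : SimpleGraph V) : List V → List V → Prop := Relation.ReflTransGen (S G)

lemma S.symm' {u v : List V} (h : S G u v) : S G v u := by
  obtain ⟨l, r, a, b, hab, hu, hv⟩ := h
  exact ⟨l, r, b, a, hab.symm, hv, hu⟩

lemma SE.refl' (u : List V) : SE G u u := Relation.ReflTransGen.refl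

lemma SE.trans' {u v w : List V} (h : SE G u v) (h' : SE G v w) : SE G u w :=
  Relation.ReflTransGen.trans h h'

lemma SE.symm' {u v : List V} (h : SE G u v) : SE G v u := by
  induction h with
  | refl => exact Relation.ReflTransGen.refl
  | tail _ hstep ih => exact Relation.ReflTransGen.head hstep.symm' ih

lemma SE.single {u v : List V} (h : S G u v) : SE G u v := Relation.ReflTransGen.single h

lemma S.cons {u v : List V} (c : V) (h : S G u v) : S G (c :: u) (c :: v) := by
  obtain ⟨l, r, a, b, hab, hu, hv⟩ := h
  exact ⟨c :: l, r, a, b, hab, by simp [hu], by simp [hv]⟩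

lemma SE.cons {u v : List V} (c : V) (h : SE G u v) : SE G (c :: u) (c :: v) :=
  Relation.ReflTransGen.lift (c :: ·) (fun _ _ (h : S G _ _) => h.cons c) _ _ h

lemma S.perm {u v : List V} (h : S G u v) : u.Perm v := by
  obtain ⟨l, r, a, b, _, hu, hv⟩ := h
  subst hu; subst hv
  exact (List.Perm.append_left l (List.Perm.swap b a r))

lemma SE.perm {u v : List V} (h : SE G u v) : u.Perm v := by
  induction h with
  | refl => exact List.Perm.refl _
  | tail _ hstep ih => exact ih.trans hstep.perm

/-- splitting a list two ways at a single element -/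
lemma two_split : ∀ (s₁ : List V) {r₁ s₂ r₂ : List V} {a b : V},
    s₁ ++ a :: r₁ = s₂ ++ b :: r₂ →
    (s₁ = s₂ ∧ a = b ∧ r₁ = r₂) ∨ (∃ t, s₂ = s₁ ++ a :: t ∧ r₁ = t ++ b :: r₂) ∨
      (∃ t, s₁ = s₂ ++ b :: t ∧ r₂ = t ++ a :: r₁) := by
  intro s₁
  induction s₁ with
  | nil =>
    intro r₁ s₂ r₂ a b h
    cases s₂ with
    | nil => simp_all
    | cons z s₀ =>
      simp only [List.nil_append, List.cons_append, List.cons.injEq] at h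
      exact Or.inr (Or.inl ⟨s₀, by simp [h.1], h.2⟩)
  | cons z s₀ ih =>
    intro r₁ s₂ r₂ a b h
    cases s₂ with
    | nil =>
      simp only [List.cons_append, List.nil_append, List.cons.injEq] at h
      exact Or.inr (Or.inr ⟨s₀, by simp [h.1], h.2.symm⟩)
    | cons z' s₀' =>
      simp only [List.cons_append, List.cons.injEq] at h
      obtain ⟨rfl, h⟩ := h
      rcases ih h with ⟨rfl, rfl, rfl⟩ | ⟨t, rfl, rfl⟩ | ⟨t, rfl, rfl⟩
      · exact Or.inl ⟨rfl, rfl, rfl⟩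
      · exact Or.inr (Or.inl ⟨t, rfl, rfl⟩)
      · exact Or.inr (Or.inr ⟨t, rfl, rfl⟩)


lemma transport1 : ∀ (L : List V) {R m' r' : List V} {x y c : V}, G.Adj x y →
    L ++ y :: x :: R = m' ++ c :: r' → (∀ z ∈ m', G.Adj c z) →
    ∃ m r, L ++ x :: y :: R = m ++ c :: r ∧ (∀ z ∈ m, G.Adj c z) ∧
      SE G (m ++ r) (m' ++ r') := by
  intro L
  induction L with
  | nil =>
    intro R m' r' x y c hxy h hm
    cases m' with
    | nil =>
      simp only [List.nil_append, List.cons.injEq] at h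
      obtain ⟨rfl, rfl⟩ := h
      exact ⟨[x], R, rfl, by simpa using hxy.symm, Relation.ReflTransGen.refl⟩
    | cons z m₀ =>
      simp only [List.nil_append, List.cons_append, List.cons.injEq] at h
      obtain ⟨rfl, h⟩ := h
      cases m₀ with
      | nil =>
        simp only [List.nil_append, List.cons.injEq] at h
        obtain ⟨rfl, rfl⟩ := h
        exact ⟨[], y :: R, rfl, by simp, Relation.ReflTransGen.refl⟩
      | cons z₁ m₁ =>
        simp only [List.cons_append, List.cons.injEq] at h
        obtain ⟨rfl, rfl⟩ := h
        refine ⟨x :: y :: m₁, r', rfl, ?_, ?_⟩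
        · intro w hw
          simp only [List.mem_cons] at hw
          rcases hw with rfl | rfl | hw
          · exact hm w (by simp)
          · exact hm w (by simp)
          · exact hm w (by simp [hw])
        · exact SE.single ⟨[], m₁ ++ r', x, y, hxy, by simp, by simp⟩
  | cons z L₀ ih =>
    intro R m' r' x y c hxy h hm
    cases m' with
    | nil =>
      simp only [List.cons_append, List.nil_append, List.cons.injEq] at h
      obtain ⟨rfl, rfl⟩ := h
      exact ⟨[], L₀ ++ x :: y :: R, rfl, by simp,
        SE.single ⟨L₀, R, x, y, hxy, rfl, rfl⟩⟩
    | cons z' m₀ =>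
      simp only [List.cons_append, List.cons.injEq] at h
      obtain ⟨rfl, h⟩ := h
      obtain ⟨m, r, heq, hadj, hse⟩ := ih hxy h (fun z hz => hm z (by simp [hz]))
      refine ⟨z :: m, r, by simp [heq], ?_, ?_⟩
      · intro w hw
        simp only [List.mem_cons] at hw
        rcases hw with rfl | hw
        · exact hm w (by simp)
        · exact hadj w hw
      · exact hse.cons z

lemma transport_step : ∀ (L : List V) {R l' m' r' : List V} {x y c : V}, G.Adj x y →
    L ++ y :: x :: R = l' ++ c :: (m' ++ c :: r') → (∀ z ∈ m', G.Adj c z) →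
    ∃ l m r, L ++ x :: y :: R = l ++ c :: (m ++ c :: r) ∧ (∀ z ∈ m, G.Adj c z) ∧
      SE G (l ++ c :: (m ++ r)) (l' ++ c :: (m' ++ r')) := by
  intro L
  induction L with
  | nil =>
    intro R l' m' r' x y c hxy h hm
    cases l' with
    | nil =>
      simp only [List.nil_append, List.cons.injEq] at h
      obtain ⟨rfl, h⟩ := h
      cases m' with
      | nil =>
        simp only [List.nil_append, List.cons.injEq] at h
        exact absurd h.1 hxy.ne
      | cons z m₀ =>
        simp only [List.cons_append, List.cons.injEq] at h
        obtain ⟨rfl, rfl⟩ := h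
        refine ⟨[x], m₀, r', rfl, fun z hz => hm z (by simp [hz]), ?_⟩
        exact SE.single ⟨[], m₀ ++ r', x, y, hxy, by simp, by simp⟩
    | cons z l₀ =>
      simp only [List.nil_append, List.cons_append, List.cons.injEq] at h
      obtain ⟨rfl, h⟩ := h
      cases l₀ with
      | nil =>
        simp only [List.nil_append, List.cons.injEq] at h
        obtain ⟨rfl, rfl⟩ := h
        refine ⟨[], y :: m', r', rfl, ?_, ?_⟩
        · intro w hw
          simp only [List.mem_cons] at hw
          rcases hw with rfl | hw
          · exact hxy
          · exact hm w hw
        · exact SE.single ⟨[], m' ++ r', x, y, hxy, by simp, by simp⟩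
      | cons z₁ l₁ =>
        simp only [List.cons_append, List.cons.injEq] at h
        obtain ⟨rfl, rfl⟩ := h
        refine ⟨x :: y :: l₁, m', r', rfl, hm, ?_⟩
        exact SE.single ⟨[], l₁ ++ c :: (m' ++ r'), x, y, hxy, by simp, by simp⟩
  | cons z L₀ ih =>
    intro R l' m' r' x y c hxy h hm
    cases l' with
    | nil =>
      simp only [List.cons_append, List.nil_append, List.cons.injEq] at h
      obtain ⟨rfl, h⟩ := h
      obtain ⟨m, r, heq, hadj, hse⟩ := transport1 L₀ hxy h hm
      exact ⟨[], m, r, by simp [heq], hadj, hse.cons z⟩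
    | cons z' l₀ =>
      simp only [List.cons_append, List.cons.injEq] at h
      obtain ⟨rfl, h⟩ := h
      obtain ⟨l, m, r, heq, hadj, hse⟩ := ih hxy h hm
      exact ⟨z :: l, m, r, by simp [heq], hadj, hse.cons z⟩

/-- transport a pattern backwards along a swap-equivalence -/
lemma transportSE {u p : List V} (h : SE G u p) :
    ∀ {l m r : List V} {c : V}, p = l ++ c :: (m ++ c :: r) → (∀ z ∈ m, G.Adj c z) →
    ∃ l' m' r', u = l' ++ c :: (m' ++ c :: r') ∧ (∀ z ∈ m', G.Adj c z) ∧
      SE G (l' ++ c :: (m' ++ r')) (l ++ c :: (m ++ r)) := by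
  induction h using Relation.ReflTransGen.head_induction_on with
  | refl => exact fun hp hm => ⟨_, _, _, hp, hm, Relation.ReflTransGen.refl⟩
  | head hstep _ ih =>
    intro l m r c hp hm
    obtain ⟨l', m', r', hp', hm', hse'⟩ := ih hp hm
    obtain ⟨L, R, a, b, hab, hu, hv⟩ := hstep
    subst hu
    rw [hv] at hp'
    obtain ⟨l₂, m₂, r₂, heq, hadj, hse⟩ := transport_step L hab hp' hm'
    exact ⟨l₂, m₂, r₂, heq, hadj, hse.trans' hse'⟩


/-- pure one-step "merge" pattern -/
def P (G : SimpleGraph V) (u v : List V) : Prop :=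
  ∃ l m r a, (∀ x ∈ m, G.Adj a x) ∧ u = l ++ a :: (m ++ a :: r) ∧ v = l ++ a :: (m ++ r)

lemma joinAux {l₁ m₁ l₂ m₂ t r₂ : List V} {a b : V}
    (h₁ : ∀ x ∈ m₁, G.Adj a x) (h₂ : ∀ x ∈ m₂, G.Adj b x)
    (hs : l₂ ++ b :: m₂ = (l₁ ++ a :: m₁) ++ a :: t) :
    ∃ z, P G (l₁ ++ a :: (m₁ ++ (t ++ b :: r₂))) z ∧ P G (l₂ ++ b :: (m₂ ++ r₂)) z := by
  rcases two_split l₂ hs with ⟨hl, rfl, rfl⟩ | ⟨u, hu1, rfl⟩ | ⟨u, hu1, hu2⟩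
  · -- l₂ = l₁ ++ a :: m₁, b = a, m₂ = t
    refine ⟨l₁ ++ b :: (m₁ ++ (m₂ ++ r₂)), ⟨l₁, m₁ ++ m₂, r₂, b, ?_, by simp, by simp⟩,
      ⟨l₁, m₁, m₂ ++ r₂, b, h₁, by simp [hl], by simp⟩⟩
    intro x hx
    rcases List.mem_append.1 hx with hx | hx
    · exact h₁ x hx
    · exact h₂ x hx
  · -- l₁ ++ a :: m₁ = l₂ ++ b :: u, m₂ = u ++ a :: t
    refine ⟨l₂ ++ b :: (u ++ (t ++ r₂)), ⟨l₂, u ++ t, r₂, b, ?_, ?_, by simp⟩,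
      ⟨l₁, m₁, t ++ r₂, a, h₁, ?_, ?_⟩⟩
    · intro x hx
      rcases List.mem_append.1 hx with hx | hx
      · exact h₂ x (by simp [hx])
      · exact h₂ x (by simp [hx])
    · have : l₁ ++ a :: (m₁ ++ (t ++ b :: r₂)) = (l₁ ++ a :: m₁) ++ (t ++ b :: r₂) := by simp
      rw [this, hu1]; simp
    · have : l₂ ++ b :: ((u ++ a :: t) ++ r₂) = (l₂ ++ b :: u) ++ (a :: (t ++ r₂)) := by simp
      rw [this, ← hu1]; simp
    · have : l₁ ++ a :: (m₁ ++ (t ++ r₂)) = (l₁ ++ a :: m₁) ++ (t ++ r₂) := by simp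
      rw [this, hu1]; simp
  · -- l₂ = (l₁ ++ a :: m₁) ++ a :: u, t = u ++ b :: m₂
    subst hu1; subst hu2
    refine ⟨(l₁ ++ a :: m₁) ++ (u ++ b :: (m₂ ++ r₂)),
      ⟨(l₁ ++ a :: m₁) ++ u, m₂, r₂, b, h₂, by simp, by simp⟩,
      ⟨l₁, m₁, u ++ b :: (m₂ ++ r₂), a, h₁, by simp, by simp⟩⟩

lemma CL {l₁ m₁ r₁ l₂ m₂ r₂ : List V} {a b : V}
    (h₁ : ∀ x ∈ m₁, G.Adj a x) (h₂ : ∀ x ∈ m₂, G.Adj b x)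
    (heq : l₁ ++ a :: (m₁ ++ a :: r₁) = l₂ ++ b :: (m₂ ++ b :: r₂)) :
    (l₁ ++ a :: (m₁ ++ r₁)) = (l₂ ++ b :: (m₂ ++ r₂)) ∨
    ∃ z, P G (l₁ ++ a :: (m₁ ++ r₁)) z ∧ P G (l₂ ++ b :: (m₂ ++ r₂)) z := by
  have heq' : (l₁ ++ a :: m₁) ++ a :: r₁ = (l₂ ++ b :: m₂) ++ b :: r₂ := by
    simpa using heq
  rcases two_split _ heq' with ⟨h1, rfl, rfl⟩ | ⟨t, hs, rfl⟩ | ⟨t, hs, rfl⟩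
  · left
    have e1 : l₁ ++ a :: (m₁ ++ r₁) = (l₁ ++ a :: m₁) ++ r₁ := by simp
    have e2 : l₂ ++ a :: (m₂ ++ r₁) = (l₂ ++ a :: m₂) ++ r₁ := by simp
    rw [e1, e2, h1]
  · right
    exact joinAux h₁ h₂ hs
  · right
    obtain ⟨z, hz₁, hz₂⟩ := joinAux h₂ h₁ hs
    exact ⟨z, hz₂, hz₁⟩

/-- one deletion modulo swaps -/
def T (G : SimpleGraph V) (u v : List V) : Prop :=
  ∃ p q, SE G u p ∧ P G p q ∧ SE G q v

def seSetoid (G : SimpleGraph V) : Setoid (List V) :=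
  ⟨SE G, ⟨fun _ => SE.refl' _, SE.symm', SE.trans'⟩⟩

def Dq (G : SimpleGraph V) : Quotient (seSetoid G) → Quotient (seSetoid G) → Prop :=
  fun x y => ∃ u v, x = Quotient.mk (seSetoid G) u ∧ y = Quotient.mk (seSetoid G) v ∧ T G u v

lemma diamond {x y z : Quotient (seSetoid G)} (hy : Dq G x y) (hz : Dq G x z) :
    ∃ d, Relation.ReflGen (Dq G) y d ∧ Relation.ReflTransGen (Dq G) z d := by
  obtain ⟨u₁, v₁, rfl, rfl, p₁, q₁, hse₁, hP₁, hq₁⟩ := hy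
  obtain ⟨u₂, v₂, hx, rfl, p₂, q₂, hse₂, hP₂, hq₂⟩ := hz
  have hu : SE G u₁ u₂ := Quotient.exact hx
  have hpp : SE G p₁ p₂ := (hse₁.symm'.trans' hu).trans' hse₂
  obtain ⟨l₂, m₂, r₂, b, hadj₂, hp₂, hq₂'⟩ := hP₂
  obtain ⟨l₂', m₂', r₂', hp₁', hadj₂', hserem⟩ := transportSE hpp hp₂ hadj₂
  obtain ⟨l₁, m₁, r₁, a, hadj₁, hp₁, hq₁'⟩ := hP₁
  have heq : l₁ ++ a :: (m₁ ++ a :: r₁) = l₂' ++ b :: (m₂' ++ b :: r₂') :=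
    hp₁.symm.trans hp₁'
  have hv₁ : SE G v₁ (l₁ ++ a :: (m₁ ++ r₁)) := by
    rw [← hq₁']; exact hq₁.symm'
  have hv₂ : SE G v₂ (l₂' ++ b :: (m₂' ++ r₂')) := by
    refine (hq₂.symm'.trans' ?_)
    rw [hq₂']; exact hserem.symm'
  rcases CL hadj₁ hadj₂' heq with hrem | ⟨ζ, hz₁, hz₂⟩
  · refine ⟨Quotient.mk (seSetoid G) v₁, Relation.ReflGen.refl, ?_⟩
    have : SE G v₂ v₁ := (hv₂.trans' (by rw [← hrem] at *; exact hv₁.symm'))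
    rw [Quotient.sound this]
  · refine ⟨Quotient.mk (seSetoid G) ζ, Relation.ReflGen.single ?_,
      Relation.ReflTransGen.single ?_⟩
    · exact ⟨v₁, ζ, rfl, rfl, _, ζ, hv₁, hz₁, SE.refl' _⟩
    · exact ⟨v₂, ζ, rfl, rfl, _, ζ, hv₂, hz₂, SE.refl' _⟩


lemma eqvGen_join {α : Type*} {r : α → α → Prop}
    (hd : ∀ a b c, r a b → r a c → ∃ d, Relation.ReflGen r b d ∧ Relation.ReflTransGen r c d)
    {a b : α} (h : Relation.EqvGen r a b) : Relation.Join (Relation.ReflTransGen r) a b := by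
  have he := Relation.equivalence_join_reflTransGen hd
  induction h with
  | rel a b h => exact ⟨b, Relation.ReflTransGen.single h, Relation.ReflTransGen.refl⟩
  | refl a => exact he.refl a
  | symm _ _ _ ih => exact he.symm ih
  | trans _ _ _ _ _ ih1 ih2 => exact he.trans ih1 ih2

lemma wordEquiv_to_eqvGen {w w' : List V} (h : WordEquiv G w w') :
    Relation.EqvGen (Dq G) (Quotient.mk (seSetoid G) w) (Quotient.mk (seSetoid G) w') := by
  induction h with
  | rel u v hstep =>
    cases hstep with
    | del l r a =>
      refine Relation.EqvGen.rel _ _ ⟨l ++ a :: a :: r, l ++ a :: r, rfl, rfl, ?_⟩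
      exact ⟨l ++ a :: a :: r, l ++ a :: r, SE.refl' _,
        ⟨l, [], r, a, by simp, by simp, by simp⟩, SE.refl' _⟩
    | swap l r a b hab =>
      have : SE G (l ++ a :: b :: r) (l ++ b :: a :: r) :=
        SE.single ⟨l, r, a, b, hab, rfl, rfl⟩
      rw [Quotient.sound this]
      exact Relation.EqvGen.refl _
  | refl u => exact Relation.EqvGen.refl _
  | symm _ _ _ ih => exact Relation.EqvGen.symm _ _ ih
  | trans _ _ _ _ _ ih1 ih2 => exact Relation.EqvGen.trans _ _ _ ih1 ih2

lemma reduced_no_pattern {w : List V} (hw : IsReducedWord G w) {l m r : List V} {a : V}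
    (hadj : ∀ x ∈ m, G.Adj a x) (heq : w = l ++ a :: (m ++ a :: r)) : False := by
  have hlen : w.length = l.length + m.length + r.length + 2 := by
    simp [heq]; omega
  have hk : l.length < w.length := by omega
  have hkl : l.length + m.length + 1 < w.length := by omega
  have hget : ∀ (i : ℕ) (hi : i < w.length), l.length ≤ i →
      i ≤ l.length + m.length + 1 → w.get ⟨i, hi⟩ =
        (a :: (m ++ a :: r))[i - l.length]'(by simp; omega) := by
    intro i hi h1 h2
    simp only [List.get_eq_getElem, heq]
    rw [List.getElem_append_right (by omega)]
  have hgk : w.get ⟨l.length, hk⟩ = a := by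
    rw [hget l.length hk le_rfl (by omega)]
    simp
  have hgkl : w.get ⟨l.length + m.length + 1, hkl⟩ = a := by
    rw [hget _ hkl (by omega) le_rfl]
    rw [List.getElem_cons]
    rw [dif_neg (by omega)]
    rw [List.getElem_append]
    rw [dif_neg (by omega)]
    rw [List.getElem_cons]
    rw [dif_pos (by omega)]
  obtain ⟨p, hp1, hp2, hp3⟩ := hw ⟨l.length, hk⟩ ⟨l.length + m.length + 1, hkl⟩
    (by simp) (hgk.trans hgkl.symm)
  simp only at hp1 hp2
  have hpm : w.get p ∈ m := by
    have hgp := hget p p.2 (by omega) (by omega)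
    have : w.get p = w.get ⟨(p : ℕ), p.2⟩ := by rfl
    rw [this, hgp]
    rw [List.getElem_cons]
    rw [dif_neg (by omega)]
    rw [List.getElem_append]
    rw [dif_pos (by omega)]
    exact List.getElem_mem _
  rw [hgk] at hp3
  exact hp3 (hadj _ hpm)

lemma reduced_normal {w : List V} (hw : IsReducedWord G w) :
    ∀ y, ¬ Dq G (Quotient.mk (seSetoid G) w) y := by
  rintro y ⟨u, v, hx, -, p, q, hse, ⟨l, m, r, a, hadj, hp, -⟩, -⟩
  have hwu : SE G w u := Quotient.exact hx
  obtain ⟨l', m', r', heq, hadj', -⟩ := transportSE (hwu.trans' hse) hp hadj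
  exact reduced_no_pattern hw hadj' heq

lemma reduced_equiv_SE {w w' : List V} (hw : IsReducedWord G w) (hw' : IsReducedWord G w')
    (h : WordEquiv G w w') : SE G w w' := by
  have h1 := wordEquiv_to_eqvGen (G := G) h
  obtain ⟨d, hd1, hd2⟩ := eqvGen_join (fun _ _ _ hy hz => diamond hy hz) h1
  have e1 : Quotient.mk (seSetoid G) w = d := by
    rcases hd1.cases_head with rfl | ⟨y, hy, -⟩
    · rfl
    · exact absurd hy (reduced_normal hw y)
  have e2 : Quotient.mk (seSetoid G) w' = d := by
    rcases hd2.cases_head with rfl | ⟨y, hy, -⟩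
    · rfl
    · exact absurd hy (reduced_normal hw' y)
  exact Quotient.exact (e1.trans e2.symm)


lemma count_eq_card_filter [DecidableEq V] :
    ∀ (u : List V) (a : V),
      (Finset.univ.filter (fun i : Fin u.length => u.get i = a)).card = u.count a := by
  intro u
  induction u with
  | nil => intro a; simp
  | cons x t ih =>
    intro a
    have hs : (∑ i : Fin (x :: t).length, if (x :: t).get i = a then 1 else 0)
        = (if x = a then 1 else 0) + ∑ i : Fin t.length, if t.get i = a then 1 else 0 :=
      Fin.sum_univ_succ (f := fun i : Fin (t.length + 1) => if (x :: t).get i = a then 1 else 0)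
    have hih : (∑ i : Fin t.length, if t.get i = a then 1 else 0) = t.count a := by
      rw [← Finset.card_filter]; exact ih a
    rw [Finset.card_filter, hs, hih, List.count_cons]
    by_cases hxa : x = a
    · simp [hxa, Nat.add_comm]
    · simp [hxa, Ne.symm hxa]

lemma card_filter_cast {n m : ℕ} (h : n = m) (p : Fin m → Prop) [DecidablePred p] :
    (Finset.univ.filter (fun i : Fin n => p (Fin.cast h i))).card =
      (Finset.univ.filter p).card := by
  subst h
  rfl

lemma strictMono_fin_id {c : ℕ} {φ : Fin c → Fin c} (h : StrictMono φ) : φ = id := by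
  have hsurj : Function.Surjective φ := Finite.surjective_of_injective h.injective
  have h2 : StrictMono (id : Fin c → Fin c) := strictMono_id
  have hr : Set.range φ = Set.range (id : Fin c → Fin c) := by
    rw [Set.range_eq_univ.2 hsurj, Set.range_id]
  haveI : WellFoundedLT (Fin c) := inferInstance
  exact (StrictMono.range_inj (β := Fin c) (γ := Fin c) h h2).1 hr

lemma exists_unique_perm [DecidableEq V] {n : ℕ} (f g : Fin n → V)
    (hcount : ∀ a : V, (Finset.univ.filter (fun i => g i = a)).card =
      (Finset.univ.filter (fun i => f i = a)).card) :
    ∃! σ : Equiv.Perm (Fin n), (∀ i, g i = f (σ i)) ∧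
      (∀ k l : Fin n, (k : ℕ) < (l : ℕ) → f k = f l →
        ((σ.symm k : Fin n) : ℕ) < ((σ.symm l : Fin n) : ℕ)) := by
  classical
  set Ff : V → Finset (Fin n) := fun a => Finset.univ.filter (fun i => f i = a) with hFf
  set Fg : V → Finset (Fin n) := fun a => Finset.univ.filter (fun i => g i = a) with hFg
  have hmemf : ∀ j : Fin n, j ∈ Ff (f j) := fun j => by simp [hFf]
  have hmemg : ∀ i : Fin n, i ∈ Fg (g i) := fun i => by simp [hFg]
  have hmemf' : ∀ (j : Fin n) (a : V), j ∈ Ff a → f j = a := fun j a hj => by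
    simpa [hFf] using hj
  have hmemg' : ∀ (i : Fin n) (a : V), i ∈ Fg a → g i = a := fun i a hi => by
    simpa [hFg] using hi
  let eF : ∀ a : V, Fin (Ff a).card ≃o {x // x ∈ Ff a} := fun a => (Ff a).orderIsoOfFin rfl
  let eG : ∀ a : V, Fin (Ff a).card ≃o {x // x ∈ Fg a} := fun a =>
    (Fg a).orderIsoOfFin (hcount a)
  let F : Fin n → Fin n := fun i => ↑(eF (g i) ((eG (g i)).symm ⟨i, hmemg i⟩))
  let Ginv : Fin n → Fin n := fun j => ↑(eG (f j) ((eF (f j)).symm ⟨j, hmemf j⟩))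
  have hfF : ∀ i, f (F i) = g i := fun i => hmemf' _ _ (eF (g i) _).2
  have hgG : ∀ j, g (Ginv j) = f j := fun j => hmemg' _ _ (eG (f j) _).2
  have keyG : ∀ (j : Fin n) (a : V) (hj : f j = a) (hmem : j ∈ Ff a),
      Ginv j = ↑(eG a ((eF a).symm ⟨j, hmem⟩)) := by
    intro j a hj hmem
    subst hj
    rfl
  have keyF : ∀ (i : Fin n) (a : V) (hi : g i = a) (hmem : i ∈ Fg a),
      F i = ↑(eF a ((eG a).symm ⟨i, hmem⟩)) := by
    intro i a hi hmem
    subst hi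
    rfl
  have hGF : ∀ i, Ginv (F i) = i := by
    intro i
    rw [keyG (F i) (g i) (hfF i) (eF (g i) _).2]
    have hsub : (⟨F i, (eF (g i) _).2⟩ : {x // x ∈ Ff (g i)}) =
        eF (g i) ((eG (g i)).symm ⟨i, hmemg i⟩) := Subtype.ext rfl
    rw [hsub, OrderIso.symm_apply_apply, OrderIso.apply_symm_apply]
  have hFG : ∀ j, F (Ginv j) = j := by
    intro j
    rw [keyF (Ginv j) (f j) (hgG j) (eG (f j) _).2]
    have hsub : (⟨Ginv j, (eG (f j) _).2⟩ : {x // x ∈ Fg (f j)}) =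
        eG (f j) ((eF (f j)).symm ⟨j, hmemf j⟩) := Subtype.ext rfl
    rw [hsub, OrderIso.symm_apply_apply, OrderIso.apply_symm_apply]
  let σ : Equiv.Perm (Fin n) := ⟨F, Ginv, hGF, hFG⟩
  have hσsymm : ∀ k, σ.symm k = Ginv k := fun k => rfl
  refine ⟨σ, ⟨fun i => (hfF i).symm, ?_⟩, ?_⟩
  · intro k l hkl hfkl
    rw [hσsymm, hσsymm]
    have hmeml : l ∈ Ff (f k) := by rw [hfkl]; exact hmemf l
    rw [keyG k (f k) rfl (hmemf k), keyG l (f k) hfkl.symm hmeml]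
    have h1 : ((eF (f k)).symm ⟨k, hmemf k⟩) < ((eF (f k)).symm ⟨l, hmeml⟩) := by
      rw [OrderIso.lt_iff_lt]
      exact Subtype.mk_lt_mk.2 hkl
    have h2 := (eG (f k)).lt_iff_lt.2 h1
    exact Subtype.coe_lt_coe.2 h2
  · rintro σ' ⟨hc1, hc2⟩
    have hmap : ∀ (x : Fin n) (a : V), f x = a → g (σ'.symm x) = a := by
      intro x a hx
      have := hc1 (σ'.symm x)
      rw [Equiv.apply_symm_apply] at this
      rw [this, hx]
    have hsymm : ∀ k, σ'.symm k = Ginv k := by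
      intro k
      let φ : Fin (Ff (f k)).card → Fin (Ff (f k)).card := fun j =>
        (eG (f k)).symm ⟨σ'.symm ↑(eF (f k) j), by
          simp only [hFg, Finset.mem_filter, Finset.mem_univ, true_and]
          exact hmap _ _ (hmemf' _ _ (eF (f k) j).2)⟩
      have hφ : StrictMono φ := by
        intro j j' hj
        have hlt : ((eF (f k) j : Fin n) : ℕ) < ((eF (f k) j' : Fin n) : ℕ) := by
          exact Subtype.coe_lt_coe.2 ((eF (f k)).lt_iff_lt.2 hj)
        have hfj : f ↑(eF (f k) j) = f k := hmemf' _ _ (eF (f k) j).2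
        have hfj' : f ↑(eF (f k) j') = f k := hmemf' _ _ (eF (f k) j').2
        have hlt2 := hc2 _ _ hlt (hfj.trans hfj'.symm)
        show (eG (f k)).symm _ < (eG (f k)).symm _
        rw [OrderIso.lt_iff_lt]
        exact Subtype.mk_lt_mk.2 hlt2
      have hid := strictMono_fin_id hφ
      have hmem : k ∈ Ff (f k) := hmemf k
      have hj := congrFun hid ((eF (f k)).symm ⟨k, hmem⟩)
      simp only [φ, id] at hj
      have hj2 := congrArg (fun z => ((eG (f k) z : {x // x ∈ Fg (f k)}) : Fin n)) hj
      simp only [OrderIso.apply_symm_apply] at hj2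
      exact hj2.trans (keyG k (f k) rfl hmem).symm
    have : σ'.symm = σ.symm := Equiv.ext fun k => (hsymm k).trans (hσsymm k).symm
    rw [← Equiv.symm_symm σ', this, Equiv.symm_symm]

end EqRedPerm

/-- If two reduced words `w` and `w'` are equivalent, then they have the same
length and there is a unique permutation `σ` with `w'_i = w_{σ(i)}` for all `i`
which moreover preserves the relative order of equal letters: whenever
`w_k = w_l` with `k < l`, then `σ⁻¹(k) < σ⁻¹(l)`. -/
theorem equiv_reduced_unique_perm {V : Type*} (G : SimpleGraph V)
    (w w' : List V) (hw : IsReducedWord G w) (hw' : IsReducedWord G w')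
    (h : WordEquiv G w w') :
    ∃ hlen : w.length = w'.length,
      ∃! σ : Equiv.Perm (Fin w.length),
        (∀ i : Fin w.length, w'.get (Fin.cast hlen i) = w.get (σ i)) ∧
        (∀ k l : Fin w.length, (k : ℕ) < (l : ℕ) → w.get k = w.get l →
          ((σ.symm k : Fin w.length) : ℕ) < ((σ.symm l : Fin w.length) : ℕ)) := by
  classical
  have hse := EqRedPerm.reduced_equiv_SE hw hw' h
  have hperm := hse.perm
  have hlen : w.length = w'.length := hperm.length_eq
  refine ⟨hlen, ?_⟩
  have hcount : ∀ a : V,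
      (Finset.univ.filter (fun i : Fin w.length => w'.get (Fin.cast hlen i) = a)).card =
      (Finset.univ.filter (fun i : Fin w.length => w.get i = a)).card := by
    intro a
    calc (Finset.univ.filter (fun i : Fin w.length => w'.get (Fin.cast hlen i) = a)).card
        = (Finset.univ.filter (fun j : Fin w'.length => w'.get j = a)).card :=
          EqRedPerm.card_filter_cast hlen (fun j : Fin w'.length => w'.get j = a)
      _ = w'.count a := EqRedPerm.count_eq_card_filter w' a
      _ = w.count a := (hperm.count_eq a).symm
      _ = (Finset.univ.filter (fun i : Fin w.length => w.get i = a)).card :=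
          (EqRedPerm.count_eq_card_filter w a).symm
  exact EqRedPerm.exists_unique_perm (fun i => w.get i)
    (fun i => w'.get (Fin.cast hlen i)) hcount
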